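/- The weighted fractional packing number of the graph G_d (d disjoint 5-cycles with their first vertices joined into a clique, first vertices weighted 2, others weighted 1) equals 2d + 2, for all d ≥ 3. -/

import Mathlib

lemma sum_zmod5 {M : Type*} [AddCommMonoid M] (f : ZMod 5 → M) :
    ∑ j, f j = f 0 + f 1 + f 2 + f 3 + f 4 := by
  have h : (Finset.univ : Finset (ZMod 5)) = {0,1,2,3,4} := by decide
  rw [h]
  rw [show ({0,1,2,3,4} : Finset (ZMod 5)) = insert 0 (insert 1 (insert 2 (insert 3 {4}))) from rfl]
  rw [Finset.sum_insert (by decide), Finset.sum_insert (by decide),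
    Finset.sum_insert (by decide), Finset.sum_insert (by decide), Finset.sum_singleton]
  simp [add_assoc]

lemma no_triangle : ∀ a b c : ZMod 5, a ≠ b → a ≠ c → b ≠ c →
    (a - b = 1 ∨ b - a = 1) → (a - c = 1 ∨ c - a = 1) → (b - c = 1 ∨ c - b = 1) → False := by
  decide

/-- The graph `𝒢_d`: `d` disjoint copies of the 5-cycle `C_5` (vertices `(i, j)`,
`j : ZMod 5`, with `j = 0` corresponding to `v_{i,1}`), together with extra edges
making the first vertices `{(i, 0)}` of all copies a clique. -/
def Gd (d : ℕ) : SimpleGraph (Fin d × ZMod 5) where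
  Adj p q := (p.1 = q.1 ∧ (p.2 - q.2 = 1 ∨ q.2 - p.2 = 1)) ∨
    (p.1 ≠ q.1 ∧ p.2 = 0 ∧ q.2 = 0)
  symm := by
    constructor
    intro p q h
    rcases h with ⟨h1, h2⟩ | ⟨h1, h2, h3⟩
    · exact Or.inl ⟨h1.symm, h2.symm⟩
    · exact Or.inr ⟨h1.symm, h3, h2⟩
  loopless := by
    constructor
    intro p h
    rcases h with ⟨_, h2 | h2⟩ | ⟨h1, _⟩
    · rw [sub_self] at h2; exact absurd h2 (by decide)
    · rw [sub_self] at h2; exact absurd h2 (by decide)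
    · exact h1 rfl

/-- Weights: `2` on each first vertex `v_{i,1}` (i.e. `(i,0)`), `1` elsewhere. -/
noncomputable def GdWeightR (d : ℕ) (p : Fin d × ZMod 5) : ℝ := if p.2 = 0 then 2 else 1

/-- The weighted fractional packing number of `(𝒢_d, w)` equals `2d + 2` for `d ≥ 3`:
it is the greatest value of `Σ_v w_v p_v` over `0 ≤ p ≤ 1` satisfying
`Σ_{v ∈ C} p_v ≤ 1` for every clique `C`. -/
theorem stmt_6 (d : ℕ) (hd : 3 ≤ d) :
    IsGreatest {t : ℝ | ∃ p : Fin d × ZMod 5 → ℝ,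
        (∀ v, 0 ≤ p v ∧ p v ≤ 1) ∧
        (∀ C : Finset (Fin d × ZMod 5), (Gd d).IsClique (C : Set (Fin d × ZMod 5)) →
          ∑ v ∈ C, p v ≤ 1) ∧
        t = ∑ v, GdWeightR d v * p v}
      (2 * d + 2) := by
  have hd0 : (0:ℝ) < d := by positivity
  have hdinv : (d:ℝ)⁻¹ ≤ 1/2 := by
    rw [inv_le_iff_one_le_mul₀ hd0]
    have : (3:ℝ) ≤ d := by exact_mod_cast hd
    nlinarith
  constructor
  · -- membership
    refine ⟨fun v => if v.2 = 0 then (d:ℝ)⁻¹ else 1/2, ?_, ?_, ?_⟩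
    · intro v
      dsimp only
      split
      · constructor
        · positivity
        · exact hdinv.trans (by norm_num)
      · norm_num
    · intro C hC
      simp only []
      by_cases hsplit : ∃ a ∈ C, ∃ b ∈ C, a.1 ≠ b.1
      · obtain ⟨a, ha, b, hb, hab⟩ := hsplit
        have hne : a ≠ b := fun h => hab (by rw [h])
        have hadj := hC ha hb hne
        have ha0 : a.2 = 0 := by
          rcases hadj with ⟨h1, _⟩ | ⟨_, h2, _⟩
          · exact absurd h1 hab
          · exact h2
        have hb0 : b.2 = 0 := by
          rcases hadj with ⟨h1, _⟩ | ⟨_, _, h3⟩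
          · exact absurd h1 hab
          · exact h3
        have hall : ∀ v ∈ C, v.2 = 0 := by
          intro v hv
          by_cases hva : v = a
          · rw [hva]; exact ha0
          by_cases hvb : v = b
          · rw [hvb]; exact hb0
          by_cases hv1 : v.1 = a.1
          · have : v.1 ≠ b.1 := by rw [hv1]; exact hab
            rcases hC hv hb hvb with ⟨h1, _⟩ | ⟨_, h2, _⟩
            · exact absurd h1 this
            · exact h2
          · rcases hC hv ha hva with ⟨h1, _⟩ | ⟨_, h2, _⟩
            · exact absurd h1 hv1
            · exact h2
        have hsum : ∑ v ∈ C, (if v.2 = 0 then (d:ℝ)⁻¹ else 1/2) = C.card * (d:ℝ)⁻¹ := by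
          rw [Finset.sum_congr rfl (fun v hv => if_pos (hall v hv))]
          simp [mul_comm]
        rw [hsum]
        have hcard : C.card ≤ d := by
          have hsub : C ⊆ Finset.univ.map ⟨fun i : Fin d => (i, (0:ZMod 5)), fun i j h => (Prod.mk.injEq _ _ _ _ ▸ h).1⟩ := by
            intro v hv
            simp only [Finset.mem_map, Finset.mem_univ, Function.Embedding.coeFn_mk, true_and]
            exact ⟨v.1, by rw [← hall v hv]; rfl⟩
          have := Finset.card_le_card hsub
          simpa using this
        calc (C.card : ℝ) * (d:ℝ)⁻¹ ≤ d * (d:ℝ)⁻¹ := by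
              apply mul_le_mul_of_nonneg_right _ (by positivity)
              exact_mod_cast hcard
          _ = 1 := mul_inv_cancel₀ (ne_of_gt hd0)
      · push_neg at hsplit
        have hcard : C.card ≤ 2 := by
          by_contra h
          push_neg at h
          obtain ⟨a, b, c, ha, hb, hc, hab, hac, hbc⟩ := Finset.two_lt_card_iff.mp h
          have e1 := hC ha hb hab
          have e2 := hC ha hc hac
          have e3 := hC hb hc hbc
          have f1 : a.2 - b.2 = 1 ∨ b.2 - a.2 = 1 := by
            rcases e1 with ⟨_, h2⟩ | ⟨h1, _⟩
            · exact h2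
            · exact absurd (hsplit a ha b hb) h1
          have f2 : a.2 - c.2 = 1 ∨ c.2 - a.2 = 1 := by
            rcases e2 with ⟨_, h2⟩ | ⟨h1, _⟩
            · exact h2
            · exact absurd (hsplit a ha c hc) h1
          have f3 : b.2 - c.2 = 1 ∨ c.2 - b.2 = 1 := by
            rcases e3 with ⟨_, h2⟩ | ⟨h1, _⟩
            · exact h2
            · exact absurd (hsplit b hb c hc) h1
          have gab : a.2 ≠ b.2 := by
            intro h'
            exact hab (Prod.ext (hsplit a ha b hb) h')
          have gac : a.2 ≠ c.2 := by
            intro h'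
            exact hac (Prod.ext (hsplit a ha c hc) h')
          have gbc : b.2 ≠ c.2 := by
            intro h'
            exact hbc (Prod.ext (hsplit b hb c hc) h')
          exact no_triangle _ _ _ gab gac gbc f1 f2 f3
        calc ∑ v ∈ C, (if v.2 = 0 then (d:ℝ)⁻¹ else 1/2)
            ≤ ∑ v ∈ C, (1/2 : ℝ) := by
              apply Finset.sum_le_sum
              intro v _
              split
              · exact hdinv
              · exact le_rfl
          _ = C.card * (1/2 : ℝ) := by simp [mul_comm]
          _ ≤ 2 * (1/2 : ℝ) := by
              apply mul_le_mul_of_nonneg_right _ (by norm_num)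
              exact_mod_cast hcard
          _ = 1 := by norm_num
    · simp only []
      rw [Fintype.sum_prod_type]
      have : ∀ i : Fin d, ∑ j : ZMod 5, GdWeightR d (i, j) * (if (i,j).2 = 0 then (d:ℝ)⁻¹ else 1/2)
          = 2 * (d:ℝ)⁻¹ + 2 := by
        intro i
        rw [sum_zmod5]
        simp only [GdWeightR, if_pos, if_neg, if_true, if_false, show ((1:ZMod 5) = 0) = False from by decide, show ((2:ZMod 5) = 0) = False from by decide, show ((3:ZMod 5) = 0) = False from by decide, show ((4:ZMod 5) = 0) = False from by decide]
        norm_num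
        ring
      rw [Finset.sum_congr rfl (fun i _ => this i)]
      rw [Finset.sum_const]
      simp only [Finset.card_univ, Fintype.card_fin, nsmul_eq_mul]
      field_simp
      ring
  · -- upper bound
    rintro t ⟨p, hp, hC, rfl⟩
    have h0 : ∑ i : Fin d, p (i, 0) ≤ 1 := by
      have := hC (Finset.univ.map ⟨fun i : Fin d => (i, (0:ZMod 5)), fun i j h => (Prod.mk.injEq _ _ _ _ ▸ h).1⟩) ?_
      · rwa [Finset.sum_map] at this
      · intro x hx y hy hxy
        simp only [Finset.coe_map, Set.mem_image, Finset.coe_univ, Set.image_univ, Set.mem_range,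
          Function.Embedding.coeFn_mk] at hx hy
        obtain ⟨i, rfl⟩ := hx
        obtain ⟨j, rfl⟩ := hy
        exact Or.inr ⟨fun h => hxy (Prod.ext h rfl), rfl, rfl⟩
    have hpair : ∀ (i : Fin d) (a b : ZMod 5), a ≠ b → (a - b = 1 ∨ b - a = 1) →
        p (i, a) + p (i, b) ≤ 1 := by
      intro i a b hab hcyc
      have := hC {(i, a), (i, b)} ?_
      · rwa [Finset.sum_pair (by simp [hab])] at this
      · intro x hx y hy hxy
        simp only [Finset.coe_insert, Finset.coe_singleton, Set.mem_insert_iff,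
          Set.mem_singleton_iff] at hx hy
        rcases hx with rfl | rfl <;> rcases hy with rfl | rfl
        · exact absurd rfl hxy
        · exact Or.inl ⟨rfl, hcyc⟩
        · exact Or.inl ⟨rfl, by tauto⟩
        · exact absurd rfl hxy
    rw [Fintype.sum_prod_type]
    have hinner : ∀ i : Fin d, ∑ j : ZMod 5, GdWeightR d (i, j) * p (i, j)
        = 2 * p (i, 0) + (p (i, 1) + p (i, 2)) + (p (i, 3) + p (i, 4)) := by
      intro i
      rw [sum_zmod5]
      simp only [GdWeightR, if_pos, if_neg, if_true, if_false, show ((1:ZMod 5) = 0) = False from by decide, show ((2:ZMod 5) = 0) = False from by decide, show ((3:ZMod 5) = 0) = False from by decide, show ((4:ZMod 5) = 0) = False from by decide]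
      ring
    rw [Finset.sum_congr rfl (fun i _ => hinner i)]
    have step : ∀ i : Fin d, 2 * p (i, 0) + (p (i, 1) + p (i, 2)) + (p (i, 3) + p (i, 4))
        ≤ 2 * p (i, 0) + 2 := by
      intro i
      have h12 := hpair i 1 2 (by decide) (by decide)
      have h34 := hpair i 3 4 (by decide) (by decide)
      linarith
    calc ∑ i : Fin d, (2 * p (i, 0) + (p (i, 1) + p (i, 2)) + (p (i, 3) + p (i, 4)))
        ≤ ∑ i : Fin d, (2 * p (i, 0) + 2) := Finset.sum_le_sum (fun i _ => step i)
      _ = 2 * (∑ i : Fin d, p (i, 0)) + 2 * d := by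
          rw [Finset.sum_add_distrib, ← Finset.mul_sum, Finset.sum_const]
          simp [mul_comm]
      _ ≤ 2 * 1 + 2 * d := by linarith
      _ = 2 * d + 2 := by ring
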